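/- arXiv:1711.07680 — 4 statements merged into one kernel-verified Lean document; each statement's English description precedes it below -/
import Mathlib

section
/- For natural numbers n, m ≥ 1 it is not the case that for all u ∈ (0,1), (n/(n+1))^{1-u} ≥ (m/(m+1))^u, nor for all u ∈ (0,1), (m/(m+1))^u ≥ (n/(n+1))^{1-u}. Consequently no single pair of uniform distributions from the classes {U(0,1/k) : k odd} and {U(0,1/k) : k even} simultaneously maximizes the u-divergence for every u ∈ (0,1). -/
lemma rpow_lt_rpow_of_log {a b u v : ℝ} (ha : 0 < a) (hb : 0 < b)
    (h : v * Real.log a < u * Real.log b) : a ^ v < b ^ u := by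
  rw [Real.rpow_def_of_pos ha, Real.rpow_def_of_pos hb]
  exact Real.exp_lt_exp.mpr (by linarith [mul_comm v (Real.log a), mul_comm u (Real.log b)])

/-- For `n, m ≥ 1`, it is neither the case that
`(n/(n+1))^(1-u) ≥ (m/(m+1))^u` for all `u ∈ (0,1)`, nor that
`(m/(m+1))^u ≥ (n/(n+1))^(1-u)` for all `u ∈ (0,1)`.  Hence no single pair of
uniform distributions from the two classes maximizes the u-divergence for every
`u ∈ (0,1)`: minimax robust single-sample tests need not exist. -/
theorem no_uniform_pair_dominates (n m : ℕ) (hn : 1 ≤ n) (hm : 1 ≤ m) :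
    ¬ (∀ u ∈ Set.Ioo (0 : ℝ) 1,
        ((m : ℝ) / (m + 1)) ^ u ≤ ((n : ℝ) / (n + 1)) ^ (1 - u)) ∧
    ¬ (∀ u ∈ Set.Ioo (0 : ℝ) 1,
        ((n : ℝ) / (n + 1)) ^ (1 - u) ≤ ((m : ℝ) / (m + 1)) ^ u) := by
  set a : ℝ := (n : ℝ) / (n + 1) with hadef
  set b : ℝ := (m : ℝ) / (m + 1) with hbdef
  have hn0 : (0 : ℝ) < n := by exact_mod_cast hn
  have hm0 : (0 : ℝ) < m := by exact_mod_cast hm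
  have ha : 0 < a := by positivity
  have hb : 0 < b := by positivity
  have ha1 : a < 1 := by rw [hadef, div_lt_one (by linarith)]; linarith
  have hb1 : b < 1 := by rw [hbdef, div_lt_one (by linarith)]; linarith
  set A : ℝ := -Real.log a with hA
  set B : ℝ := -Real.log b with hB
  have hApos : 0 < A := by simp [hA]; exact Real.log_neg ha ha1
  have hBpos : 0 < B := by simp [hB]; exact Real.log_neg hb hb1
  have hD : 0 < 2 * (A + B) := by linarith
  constructor
  · intro h
    set u : ℝ := A / (2 * (A + B)) with hu
    have hu0 : 0 < u := by positivity
    have hu1 : u < 1 := by rw [hu, div_lt_one hD]; linarith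
    have key : a ^ (1 - u) < b ^ u := by
      apply rpow_lt_rpow_of_log ha hb
      have h1 : Real.log a = -A := by rw [hA]; ring
      have h2 : Real.log b = -B := by rw [hB]; ring
      have ht : u * (2 * (A + B)) = A := by rw [hu]; field_simp
      rw [h1, h2]
      nlinarith [ht]
    exact absurd (h u ⟨hu0, hu1⟩) (not_le.mpr key)
  · intro h
    set u : ℝ := (2 * A + B) / (2 * (A + B)) with hu
    have hu0 : 0 < u := by positivity
    have hu1 : u < 1 := by rw [hu, div_lt_one hD]; linarith
    have key : b ^ u < a ^ (1 - u) := by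
      apply rpow_lt_rpow_of_log hb ha
      have h1 : Real.log a = -A := by rw [hA]; ring
      have h2 : Real.log b = -B := by rw [hB]; ring
      have ht : u * (2 * (A + B)) = 2 * A + B := by rw [hu]; field_simp
      rw [h1, h2]
      nlinarith [ht]
    exact absurd (h u ⟨hu0, hu1⟩) (not_le.mpr key)
end

section
/- The Chernoff exponent equals the optimal rate: −inf_{u∈[0,1]} ln ∫ g1^u g0^{1-u} dμ = I_0(0), where I_0(t) = sup_{u∈ℝ} (tu − ln ∫ (g1/g0)^u g0 dμ). -/
open MeasureTheory

/-- The Chernoff exponent equals the optimal rate at threshold `0`: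
`−inf_{u∈[0,1]} ln ∫ g1^u g0^(1-u) dμ = I_0(0)` with
`I_0(t) = sup_{u∈ℝ} (t u − ln ∫ (g1/g0)^u g0 dμ)`. -/
theorem chernoff_exponent_eq_rate_at_zero {α : Type*} [MeasurableSpace α]
    (μ : Measure α) [SigmaFinite μ]
    (g0 g1 : α → ℝ) (hg0meas : Measurable g0) (hg1meas : Measurable g1)
    (hg0 : ∀ y, 0 < g0 y) (hg1 : ∀ y, 0 < g1 y)
    (hg0int : ∫ y, g0 y ∂μ = 1) (hg1int : ∫ y, g1 y ∂μ = 1)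
    (hint : ∀ u ∈ Set.Icc (0 : ℝ) 1,
      Integrable (fun y => (g1 y / g0 y) ^ u * g0 y) μ) :
    -(⨅ u : Set.Icc (0 : ℝ) 1,
        Real.log (∫ y, g1 y ^ (u : ℝ) * g0 y ^ (1 - (u : ℝ)) ∂μ))
      = ⨆ u : ℝ, ((0 : ℝ) * u - Real.log (∫ y, (g1 y / g0 y) ^ u * g0 y ∂μ)) := by
  have hg0ne : ∀ y, g0 y ≠ 0 := fun y => (hg0 y).ne'
  -- the two integrands agree
  have hEq : ∀ (u : ℝ) (y : α),
      g1 y ^ u * g0 y ^ (1 - u) = (g1 y / g0 y) ^ u * g0 y := by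
    intro u y
    rw [Real.div_rpow (hg1 y).le (hg0 y).le, Real.rpow_sub (hg0 y), Real.rpow_one]
    have : g0 y ^ u ≠ 0 := (Real.rpow_pos_of_pos (hg0 y) u).ne'
    field_simp
  simp_rw [hEq, zero_mul, zero_sub]
  set Λ : ℝ → ℝ := fun u => ∫ y, (g1 y / g0 y) ^ u * g0 y ∂μ with hΛ
  -- basic integrability
  have hg0i : Integrable g0 μ := by
    have := hint 0 ⟨le_refl _, zero_le_one⟩
    simpa using this
  have hg1i : Integrable g1 μ := by
    have h := hint 1 ⟨zero_le_one, le_refl _⟩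
    refine h.congr (Filter.Eventually.of_forall fun y => ?_)
    simp [Real.rpow_one, div_mul_cancel₀ _ (hg0ne y)]
  -- the minimum function and its positive integral
  have hminmeas : Measurable fun y => min (g0 y) (g1 y) := hg0meas.min hg1meas
  have hmini : Integrable (fun y => min (g0 y) (g1 y)) μ := by
    refine hg0i.mono hminmeas.aestronglyMeasurable (Filter.Eventually.of_forall fun y => ?_)
    rw [Real.norm_eq_abs, Real.norm_eq_abs, abs_of_pos (lt_min (hg0 y) (hg1 y)),
      abs_of_pos (hg0 y)]
    exact min_le_left _ _
  have hμ : μ ≠ 0 := by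
    intro h
    rw [h] at hg0int
    simp at hg0int
  have hc : 0 < ∫ y, min (g0 y) (g1 y) ∂μ := by
    rw [integral_pos_iff_support_of_nonneg (fun y => (lt_min (hg0 y) (hg1 y)).le) hmini]
    have : Function.support (fun y => min (g0 y) (g1 y)) = Set.univ := by
      ext y; simp [Function.mem_support, (lt_min (hg0 y) (hg1 y)).ne']
    rw [this]
    exact Measure.measure_univ_pos.mpr hμ
  -- lower bound on [0,1]
  have hlow : ∀ u ∈ Set.Icc (0 : ℝ) 1, (∫ y, min (g0 y) (g1 y) ∂μ) ≤ Λ u := by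
    intro u hu
    refine integral_mono hmini (hint u hu) fun y => ?_
    have hm : 0 < min (g0 y) (g1 y) := lt_min (hg0 y) (hg1 y)
    rw [← hEq u y]
    calc min (g0 y) (g1 y)
        = min (g0 y) (g1 y) ^ u * min (g0 y) (g1 y) ^ (1 - u) := by
          rw [← Real.rpow_add hm]; simp
      _ ≤ g1 y ^ u * g0 y ^ (1 - u) := by
          refine mul_le_mul (Real.rpow_le_rpow hm.le (min_le_right _ _) hu.1)
            (Real.rpow_le_rpow hm.le (min_le_left _ _) (by linarith [hu.2]))
            (Real.rpow_nonneg hm.le _) (Real.rpow_nonneg (hg1 y).le _)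
  -- outside [0,1] the log is nonnegative
  have hout : ∀ u : ℝ, u ∉ Set.Icc (0 : ℝ) 1 → 0 ≤ Real.log (Λ u) := by
    intro u hu
    by_cases h : Integrable (fun y => (g1 y / g0 y) ^ u * g0 y) μ
    · have hber : ∀ y, g0 y + u * (g1 y - g0 y) ≤ (g1 y / g0 y) ^ u * g0 y := by
        intro y
        set x : ℝ := g1 y / g0 y with hx
        have hxpos : 0 < x := div_pos (hg1 y) (hg0 y)
        have key : 1 + u * (x - 1) ≤ x ^ u := by
          rcases lt_or_ge u 0 with h1 | hge
          · -- u < 0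
            have hle : u ≤ 0 := h1.le
            have h2 : Real.log x ≤ x - 1 := Real.log_le_sub_one_of_pos hxpos
            have h3 : u * (x - 1) ≤ u * Real.log x :=
              mul_le_mul_of_nonpos_left h2 hle
            have h4 : 1 + u * Real.log x ≤ x ^ u := by
              rw [Real.rpow_def_of_pos hxpos]
              have := Real.add_one_le_exp (Real.log x * u)
              linarith [this]
            linarith
          · -- 1 < u
            have h1 : 1 < u := lt_of_not_ge fun hle => hu ⟨hge, hle⟩
            have h2 := one_add_mul_self_le_rpow_one_add
              (s := x - 1) (by linarith) (p := u) h1.le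
            have h3 : (1 : ℝ) + (x - 1) = x := by ring
            rw [h3] at h2
            exact h2
        have hmul : (1 + u * (x - 1)) * g0 y ≤ x ^ u * g0 y :=
          mul_le_mul_of_nonneg_right key (hg0 y).le
        have hid : (1 + u * (x - 1)) * g0 y = g0 y + u * (g1 y - g0 y) := by
          have hxg : x * g0 y = g1 y := by
            rw [hx]; exact div_mul_cancel₀ _ (hg0ne y)
          calc (1 + u * (x - 1)) * g0 y = g0 y + u * (x * g0 y - g0 y) := by ring
            _ = g0 y + u * (g1 y - g0 y) := by rw [hxg]
        linarith [hmul, hid.symm.le]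
      have hsub : Integrable (fun y => g1 y - g0 y) μ := hg1i.sub hg0i
      have hcm : Integrable (fun y => u * (g1 y - g0 y)) μ := hsub.const_mul u
      have hib : Integrable (fun y => g0 y + u * (g1 y - g0 y)) μ := hg0i.add hcm
      have h1 : (1 : ℝ) ≤ Λ u := by
        have hmono := integral_mono hib h (fun y => hber y)
        have : ∫ y, (g0 y + u * (g1 y - g0 y)) ∂μ = 1 := by
          rw [integral_add hg0i hcm, integral_const_mul,
            integral_sub hg1i hg0i, hg0int, hg1int]
          ring
        rw [this] at hmono
        exact hmono
      exact Real.log_nonneg h1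
    · have hz : Λ u = 0 := integral_undef h
      rw [hz, Real.log_zero]
  -- infimum bookkeeping
  have hbddB : BddBelow (Set.range fun u : Set.Icc (0 : ℝ) 1 => Real.log (Λ u)) := by
    refine ⟨Real.log (∫ y, min (g0 y) (g1 y) ∂μ), ?_⟩
    rintro x ⟨u, rfl⟩
    exact Real.log_le_log hc (hlow u u.2)
  set m : ℝ := ⨅ u : Set.Icc (0 : ℝ) 1, Real.log (Λ u) with hm
  have hm0 : m ≤ 0 := by
    have := ciInf_le hbddB (⟨0, le_refl _, zero_le_one⟩ : Set.Icc (0 : ℝ) 1)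
    have hΛ0 : Λ 0 = 1 := by
      rw [hΛ]; simpa using hg0int
    rw [hΛ0, Real.log_one] at this
    exact this
  have hub : ∀ u : ℝ, -Real.log (Λ u) ≤ -m := by
    intro u
    by_cases h : u ∈ Set.Icc (0 : ℝ) 1
    · exact neg_le_neg (ciInf_le hbddB (⟨u, h⟩ : Set.Icc (0 : ℝ) 1))
    · exact neg_le_neg (le_trans hm0 (hout u h))
  have hbddA : BddAbove (Set.range fun u : ℝ => -Real.log (Λ u)) := by
    refine ⟨-m, ?_⟩
    rintro x ⟨u, rfl⟩
    exact hub u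
  refine le_antisymm ?_ (ciSup_le hub)
  rw [neg_le]
  refine le_ciInf fun u => ?_
  have := le_ciSup hbddA (u : ℝ)
  linarith
end

section
/- In the band model with only upper bounds (g_j ≤ (1+ε_j) f_j), let ĝ0, ĝ1 be the least favorable densities of Theorem 7 with robust likelihood ratio l̂ clipped to [t_l, t_u]. Then for every threshold t and every G0 ∈ G0^{ε+}, G1 ∈ G1^{ε+}: G0[l̂ < t] ≥ Ĝ0[l̂ < t] and G1[l̂ < t] ≤ Ĝ1[l̂ < t]. -/
open MeasureTheory ENNReal

/-- Upper bounding function of the band model: `g^U = (1+ε) f`. -/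
noncomputable def bandUpper {α : Type*} (ε : ℝ≥0∞) (f : α → ℝ≥0∞) : α → ℝ≥0∞ :=
  fun y => (1 + ε) * f y

/-- Least favorable density under `H0` for the upper-bounded band model:
`ĝ0 = g0U` on `{l ≥ t_l}` and `ĝ0 = g1U / t_l` on `{l < t_l}`, `l = g1U/g0U`. -/
noncomputable def bandLFD0 {α : Type*} (tl : ℝ≥0∞) (g0U g1U : α → ℝ≥0∞) : α → ℝ≥0∞ :=
  fun y => if tl ≤ g1U y / g0U y then g0U y else g1U y / tl

/-- Least favorable density under `H1` for the upper-bounded band model: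
`ĝ1 = g1U` on `{l ≤ t_u}` and `ĝ1 = t_u g0U` on `{l > t_u}`, `l = g1U/g0U`. -/
noncomputable def bandLFD1 {α : Type*} (tu : ℝ≥0∞) (g0U g1U : α → ℝ≥0∞) : α → ℝ≥0∞ :=
  fun y => if g1U y / g0U y ≤ tu then g1U y else tu * g0U y

/-- In the band model with only upper bounds `g_j ≤ (1+ε_j) f_j`, the least
favorable densities `ĝ0, ĝ1` (whose likelihood ratio `l̂ = ĝ1/ĝ0` is `l` clipped
to `[t_l, t_u]`) are single-sample minimax robust: for every threshold `t` and
all densities `G0, G1` in the respective classes,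
`G0[l̂ < t] ≥ Ĝ0[l̂ < t]` and `G1[l̂ < t] ≤ Ĝ1[l̂ < t]`. -/
theorem band_upper_LFDs_minimax {α : Type*} [MeasurableSpace α]
    (μ : Measure α) [SigmaFinite μ]
    (f0 f1 : α → ℝ≥0∞) (hf0meas : Measurable f0) (hf1meas : Measurable f1)
    (hf0pos : ∀ y, 0 < f0 y) (hf1pos : ∀ y, 0 < f1 y)
    (hf0fin : ∀ y, f0 y ≠ ∞) (hf1fin : ∀ y, f1 y ≠ ∞)
    (hf0int : ∫⁻ y, f0 y ∂μ = 1) (hf1int : ∫⁻ y, f1 y ∂μ = 1)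
    (ε0 ε1 : ℝ≥0∞) (hε0 : ε0 ≠ ∞) (hε1 : ε1 ≠ ∞)
    (tl tu : ℝ≥0∞) (htl : 0 < tl) (htltu : tl < tu) (htu : tu ≠ ∞)
    -- normalization of the least favorable densities
    (hghat0int : ∫⁻ y, bandLFD0 tl (bandUpper ε0 f0) (bandUpper ε1 f1) y ∂μ = 1)
    (hghat1int : ∫⁻ y, bandLFD1 tu (bandUpper ε0 f0) (bandUpper ε1 f1) y ∂μ = 1)
    (g0 g1 : α → ℝ≥0∞) (hg0meas : Measurable g0) (hg1meas : Measurable g1)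
    (hg0int : ∫⁻ y, g0 y ∂μ = 1) (hg1int : ∫⁻ y, g1 y ∂μ = 1)
    (hg0ub : ∀ y, g0 y ≤ bandUpper ε0 f0 y) (hg1ub : ∀ y, g1 y ≤ bandUpper ε1 f1 y)
    (t : ℝ≥0∞) :
    (∫⁻ y in {y | bandLFD1 tu (bandUpper ε0 f0) (bandUpper ε1 f1) y
            / bandLFD0 tl (bandUpper ε0 f0) (bandUpper ε1 f1) y < t},
        bandLFD0 tl (bandUpper ε0 f0) (bandUpper ε1 f1) y ∂μ
      ≤ ∫⁻ y in {y | bandLFD1 tu (bandUpper ε0 f0) (bandUpper ε1 f1) y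
            / bandLFD0 tl (bandUpper ε0 f0) (bandUpper ε1 f1) y < t}, g0 y ∂μ) ∧
    (∫⁻ y in {y | bandLFD1 tu (bandUpper ε0 f0) (bandUpper ε1 f1) y
            / bandLFD0 tl (bandUpper ε0 f0) (bandUpper ε1 f1) y < t}, g1 y ∂μ
      ≤ ∫⁻ y in {y | bandLFD1 tu (bandUpper ε0 f0) (bandUpper ε1 f1) y
            / bandLFD0 tl (bandUpper ε0 f0) (bandUpper ε1 f1) y < t},
          bandLFD1 tu (bandUpper ε0 f0) (bandUpper ε1 f1) y ∂μ) := by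
  set g0U := bandUpper ε0 f0 with hg0U_def
  set g1U := bandUpper ε1 f1 with hg1U_def
  set Ghat0 := bandLFD0 tl g0U g1U with hGhat0_def
  set Ghat1 := bandLFD1 tu g0U g1U with hGhat1_def
  have htl0 : tl ≠ 0 := htl.ne'
  have htufin : tu ≠ ∞ := htu
  have htlfin : tl ≠ ∞ := ne_top_of_lt htltu
  have htu0 : tu ≠ 0 := (htl.trans htltu).ne'
  have h1ε0 : (1 + ε0) ≠ 0 := by
    intro h; rw [add_eq_zero] at h; exact one_ne_zero h.1
  have h1ε1 : (1 + ε1) ≠ 0 := by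
    intro h; rw [add_eq_zero] at h; exact one_ne_zero h.1
  have h1ε0fin : (1 + ε0) ≠ ∞ := by finiteness
  have h1ε1fin : (1 + ε1) ≠ ∞ := by finiteness
  have hg0U0 : ∀ y, g0U y ≠ 0 := fun y => mul_ne_zero h1ε0 (hf0pos y).ne'
  have hg0Ufin : ∀ y, g0U y ≠ ∞ := fun y => ENNReal.mul_ne_top h1ε0fin (hf0fin y)
  have hg1U0 : ∀ y, g1U y ≠ 0 := fun y => mul_ne_zero h1ε1 (hf1pos y).ne'
  have hg1Ufin : ∀ y, g1U y ≠ ∞ := fun y => ENNReal.mul_ne_top h1ε1fin (hf1fin y)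
  have hg0Umeas : Measurable g0U := hf0meas.const_mul _
  have hg1Umeas : Measurable g1U := hf1meas.const_mul _
  have hGhat0meas : Measurable Ghat0 :=
    Measurable.ite (measurableSet_le measurable_const (hg1Umeas.div hg0Umeas))
      hg0Umeas (hg1Umeas.div measurable_const)
  have hGhat1meas : Measurable Ghat1 :=
    Measurable.ite (measurableSet_le (hg1Umeas.div hg0Umeas) measurable_const)
      hg1Umeas (hg0Umeas.const_mul _)
  set L : α → ℝ≥0∞ := fun y => g1U y / g0U y with hL_def
  set R : α → ℝ≥0∞ := fun y => Ghat1 y / Ghat0 y with hR_def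
  -- pointwise values of R
  have hR_lo : ∀ y, L y < tl → R y = tl := by
    intro y h
    have h1 : Ghat1 y = g1U y := if_pos (h.le.trans htltu.le)
    have h0 : Ghat0 y = g1U y / tl := if_neg (not_le.2 h)
    rw [hR_def]
    simp only [h1, h0]
    refine ((ENNReal.eq_div_iff ?_ ?_).2 ?_).symm
    · exact ENNReal.div_ne_zero.2 ⟨hg1U0 y, htlfin⟩
    · exact (ENNReal.div_lt_top (hg1Ufin y) htl0).ne
    · exact ENNReal.div_mul_cancel htl0 htlfin
  have hR_mid : ∀ y, tl ≤ L y → L y ≤ tu → R y = L y := by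
    intro y h1 h2
    have e1 : Ghat1 y = g1U y := if_pos h2
    have e0 : Ghat0 y = g0U y := if_pos h1
    rw [hR_def]; simp only [e1, e0]; rfl
  have hR_hi : ∀ y, tu < L y → R y = tu := by
    intro y h
    have e1 : Ghat1 y = tu * g0U y := if_neg (not_le.2 h)
    have e0 : Ghat0 y = g0U y := if_pos ((htltu.trans h).le)
    rw [hR_def]; simp only [e1, e0]
    exact ((ENNReal.eq_div_iff (hg0U0 y) (hg0Ufin y)).2 (mul_comm _ _)).symm
  have hR_ge : ∀ y, tl ≤ R y := by
    intro y
    rcases lt_or_ge (L y) tl with h | h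
    · exact (hR_lo y h).ge
    rcases le_or_gt (L y) tu with h2 | h2
    · rw [hR_mid y h h2]; exact h
    · rw [hR_hi y h2]; exact htltu.le
  have hR_le : ∀ y, R y ≤ tu := by
    intro y
    rcases lt_or_ge (L y) tl with h | h
    · rw [hR_lo y h]; exact htltu.le
    rcases le_or_gt (L y) tu with h2 | h2
    · rw [hR_mid y h h2]; exact h2
    · exact (hR_hi y h2).le
  set A : Set α := {y | R y < t} with hA_def
  have hAmeas : MeasurableSet A :=
    measurableSet_lt (hGhat1meas.div hGhat0meas) measurable_const
  -- show the sets in the goal equal A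
  constructor
  · -- first inequality
    rcases le_or_gt t tl with ht | ht
    · -- A is empty
      have hAe : A = ∅ := by
        ext y; simp only [hA_def, Set.mem_setOf_eq, Set.mem_empty_iff_false, iff_false, not_lt]
        exact ht.trans (hR_ge y)
      show ∫⁻ y in A, Ghat0 y ∂μ ≤ ∫⁻ y in A, g0 y ∂μ
      rw [hAe]; simp
    · -- complement argument
      have hcompl : ∀ y ∈ Aᶜ, g0 y ≤ Ghat0 y := by
        intro y hy
        have hty : t ≤ R y := not_lt.1 hy
        have hLy : tl ≤ L y := by
          by_contra hc
          have := hR_lo y (not_le.1 hc)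
          rw [this] at hty
          exact absurd (ht.trans_le hty) (lt_irrefl _)
        have : Ghat0 y = g0U y := if_pos hLy
        rw [this]; exact hg0ub y
      have h1 : ∫⁻ y in A, Ghat0 y ∂μ + ∫⁻ y in Aᶜ, Ghat0 y ∂μ = 1 := by
        rw [lintegral_add_compl _ hAmeas]; exact hghat0int
      have h2 : ∫⁻ y in A, g0 y ∂μ + ∫⁻ y in Aᶜ, g0 y ∂μ = 1 := by
        rw [lintegral_add_compl _ hAmeas]; exact hg0int
      have h3 : ∫⁻ y in Aᶜ, g0 y ∂μ ≤ ∫⁻ y in Aᶜ, Ghat0 y ∂μ :=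
        setLIntegral_mono' hAmeas.compl hcompl
      have hfin : ∫⁻ y in Aᶜ, g0 y ∂μ ≠ ∞ := by
        intro hc
        rw [hc, add_top] at h2
        exact (by simp : (⊤ : ℝ≥0∞) ≠ 1) h2
      have : ∫⁻ y in A, Ghat0 y ∂μ + ∫⁻ y in Aᶜ, g0 y ∂μ ≤
          ∫⁻ y in A, g0 y ∂μ + ∫⁻ y in Aᶜ, g0 y ∂μ := by
        rw [h2, ← h1]
        exact add_le_add_right h3 _
      exact ENNReal.le_of_add_le_add_right hfin this
  · -- second inequality
    rcases le_or_gt t tu with ht | ht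
    · refine setLIntegral_mono' hAmeas ?_
      intro y hy
      have hRy : R y < t := hy
      have hLy : L y ≤ tu := by
        by_contra hc
        have := hR_hi y (not_le.1 hc)
        rw [this] at hRy
        exact absurd (hRy.trans_le ht) (lt_irrefl _)
      have : Ghat1 y = g1U y := if_pos hLy
      rw [this]; exact hg1ub y
    · have hAu : A = Set.univ := by
        ext y; simp only [hA_def, Set.mem_setOf_eq, Set.mem_univ, iff_true]
        exact (hR_le y).trans_lt ht
      show ∫⁻ y in A, g1 y ∂μ ≤ ∫⁻ y in A, Ghat1 y ∂μ
      rw [hAu, Measure.restrict_univ, hg1int, hghat1int]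
end

section
/- Suppose the likelihood ratio l̂ = ĝ1/ĝ0 is clipped, i.e. takes values in [t_l, t_u] with 0 < t_l < 1 < t_u. If ∫_{l ≤ t_u} g0^L dμ + (1/t_u) ∫_{l > t_u} g1^L dμ = 1 and ∫_{l ≥ t_l} g1^L dμ + t_l ∫_{l < t_l} g0^L dμ = 1, then the functions ĝ0 = g0^L on {l ≤ t_u}, ĝ0 = (1/t_u) g1^L on {l > t_u}, and ĝ1 = g1^L on {l ≥ t_l}, ĝ1 = t_l g0^L on {l < t_l} are probability densities satisfying ĝ0 ≥ g0^L, ĝ1 ≥ g1^L, and ĝ1/ĝ0 is the clipping of l = g1^L/g0^L to [t_l, t_u]. -/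
open MeasureTheory ENNReal

/-- In the band model with only lower bounds `g_j^L`, if the two normalization
conditions hold, then the densities `ĝ0 = g0L` on `{l ≤ t_u}`, `ĝ0 = g1L/t_u` on
`{l > t_u}` and `ĝ1 = g1L` on `{l ≥ t_l}`, `ĝ1 = t_l g0L` on `{l < t_l}`
(with `l = g1L/g0L`) are probability densities dominating the lower bounds, and
their likelihood ratio `ĝ1/ĝ0` is `l` clipped to `[t_l, t_u]`. -/
theorem band_lower_LFDs {α : Type*} [MeasurableSpace α]
    (μ : Measure α) [SigmaFinite μ]
    (g0L g1L : α → ℝ≥0∞) (hg0meas : Measurable g0L) (hg1meas : Measurable g1L)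
    (hg0pos : ∀ y, 0 < g0L y) (hg1pos : ∀ y, 0 < g1L y)
    (hg0fin : ∀ y, g0L y ≠ ∞) (hg1fin : ∀ y, g1L y ≠ ∞)
    (hg0int : ∫⁻ y, g0L y ∂μ ≤ 1) (hg1int : ∫⁻ y, g1L y ∂μ ≤ 1)
    (tl tu : ℝ≥0∞) (htl : 0 < tl) (htl1 : tl < 1) (h1tu : 1 < tu) (htu : tu ≠ ∞)
    (hnorm0 : ∫⁻ y in {y | g1L y / g0L y ≤ tu}, g0L y ∂μ
        + (1 / tu) * ∫⁻ y in {y | tu < g1L y / g0L y}, g1L y ∂μ = 1)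
    (hnorm1 : ∫⁻ y in {y | tl ≤ g1L y / g0L y}, g1L y ∂μ
        + tl * ∫⁻ y in {y | g1L y / g0L y < tl}, g0L y ∂μ = 1) :
    (∫⁻ y, (if g1L y / g0L y ≤ tu then g0L y else g1L y / tu) ∂μ = 1) ∧
    (∫⁻ y, (if tl ≤ g1L y / g0L y then g1L y else tl * g0L y) ∂μ = 1) ∧
    (∀ y, g0L y ≤ (if g1L y / g0L y ≤ tu then g0L y else g1L y / tu)) ∧
    (∀ y, g1L y ≤ (if tl ≤ g1L y / g0L y then g1L y else tl * g0L y)) ∧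
    (∀ y, (if tl ≤ g1L y / g0L y then g1L y else tl * g0L y)
        / (if g1L y / g0L y ≤ tu then g0L y else g1L y / tu)
      = min tu (max tl (g1L y / g0L y))) := by
  have hl : Measurable fun y => g1L y / g0L y := hg1meas.div hg0meas
  have hS0 : MeasurableSet {y | g1L y / g0L y ≤ tu} :=
    measurableSet_le hl measurable_const
  have hS1 : MeasurableSet {y | tl ≤ g1L y / g0L y} :=
    measurableSet_le measurable_const hl
  have htu0 : tu ≠ 0 := by positivity
  have htl' : tl ≠ 0 := htl.ne'
  have htlfin : tl ≠ ∞ := (htl1.trans one_lt_top).ne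
  have hcompl0 : {y | g1L y / g0L y ≤ tu}ᶜ = {y | tu < g1L y / g0L y} := by
    ext y; simp [not_le]
  have hcompl1 : {y | tl ≤ g1L y / g0L y}ᶜ = {y | g1L y / g0L y < tl} := by
    ext y; simp [not_le]
  refine ⟨?_, ?_, ?_, ?_, ?_⟩
  · rw [← hnorm0, ← lintegral_add_compl _ hS0]
    congr 1
    · refine setLIntegral_congr_fun hS0 (fun y hy => ?_)
      simp only [Set.mem_setOf_eq] at hy
      simp [hy]
    · rw [← lintegral_const_mul (1 / tu) hg1meas, ← hcompl0]
      refine setLIntegral_congr_fun hS0.compl (fun y hy => ?_)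
      simp only [Set.mem_compl_iff, Set.mem_setOf_eq, not_le] at hy
      rw [if_neg hy.not_ge]
      simp [div_eq_mul_inv, one_div, mul_comm]
  · rw [← hnorm1, ← lintegral_add_compl _ hS1]
    congr 1
    · refine setLIntegral_congr_fun hS1 (fun y hy => ?_)
      simp only [Set.mem_setOf_eq] at hy
      simp [hy]
    · rw [← lintegral_const_mul tl hg0meas, ← hcompl1]
      refine setLIntegral_congr_fun hS1.compl (fun y hy => ?_)
      simp only [Set.mem_compl_iff, Set.mem_setOf_eq, not_le] at hy
      simp [hy.not_ge]
  · intro y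
    by_cases h : g1L y / g0L y ≤ tu
    · simp [h]
    · simp only [h, if_false]
      rw [ENNReal.le_div_iff_mul_le (Or.inl htu0) (Or.inl htu)]
      have h' : tu < g1L y / g0L y := not_le.mp h
      rw [ENNReal.lt_div_iff_mul_lt (Or.inl (hg0pos y).ne') (Or.inl (hg0fin y))] at h'
      calc g0L y * tu = tu * g0L y := mul_comm _ _
        _ ≤ g1L y := h'.le
  · intro y
    by_cases h : tl ≤ g1L y / g0L y
    · simp [h]
    · simp only [h, if_false]
      have h' : g1L y / g0L y < tl := not_le.mp h
      rw [ENNReal.div_lt_iff (Or.inl (hg0pos y).ne') (Or.inl (hg0fin y))] at h'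
      exact h'.le
  · intro y
    by_cases h : g1L y / g0L y ≤ tu
    · by_cases h' : tl ≤ g1L y / g0L y
      · simp [h, h', min_eq_right, max_eq_right]
      · have h'' : g1L y / g0L y < tl := not_le.mp h'
        simp only [h, h', if_true, if_false]
        rw [mul_comm, mul_div_assoc, ENNReal.mul_div_cancel (hg0pos y).ne' (hg0fin y)]
        rw [max_eq_left h''.le, min_eq_right (htl1.trans h1tu).le]
    · have h2 : tu < g1L y / g0L y := not_le.mp h
      have h' : tl ≤ g1L y / g0L y := ((htl1.trans h1tu).trans h2).le
      simp only [h, h', if_true, if_false]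
      rw [div_eq_mul_inv (g1L y) (g1L y / tu),
        ENNReal.inv_div (Or.inl htu) (Or.inl htu0),
        ENNReal.mul_div_cancel (hg1pos y).ne' (hg1fin y),
        max_eq_right h', min_eq_left h2.le]
end
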